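/- A bounded Hankel operator on l²(X₊) has no bounded left inverse. -/

import Mathlib

/-- A bounded Hankel operator on `l²(X₊)` has no bounded left inverse. -/
theorem stmt_4 {X : Type*} [CommGroup X] [LinearOrder X] [IsOrderedMonoid X] [Nontrivial X]
    (Γ : lp (fun _ : {χ : X // 1 ≤ χ} => ℂ) 2 →L[ℂ] lp (fun _ : {χ : X // 1 ≤ χ} => ℂ) 2)
    (a : X → ℂ)
    (hΓ : ∀ χ ξ : {χ : X // 1 ≤ χ},
      (Γ (lp.single 2 χ (1 : ℂ))) ξ = a ((χ : X) * (ξ : X))) :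
    ¬ ∃ L : lp (fun _ : {χ : X // 1 ≤ χ} => ℂ) 2 →L[ℂ] lp (fun _ : {χ : X // 1 ≤ χ} => ℂ) 2,
      L.comp Γ = ContinuousLinearMap.id ℂ (lp (fun _ : {χ : X // 1 ≤ χ} => ℂ) 2) := by
  rintro ⟨L, hL⟩
  have hp : 0 < (2 : ENNReal).toReal := by norm_num
  have h2 : (2 : ENNReal).toReal = (2 : ℝ) := by norm_num
  have hLΓ : ∀ v, L (Γ v) = v := fun v => by
    simpa using DFunLike.congr_fun hL v
  -- norm of single basis vectors is 1
  set e : {χ : X // 1 ≤ χ} → lp (fun _ : {χ : X // 1 ≤ χ} => ℂ) 2 := fun χ => lp.single 2 χ (1 : ℂ) with he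
  have hnorm_e : ∀ χ : {χ : X // 1 ≤ χ}, ‖e χ‖ = 1 := by
    intro χ
    have := lp.norm_single (p := 2) (E := fun _ : {χ : X // 1 ≤ χ} => ℂ) (by norm_num) χ (1 : ℂ)
    simpa [he] using this
  -- lower bound on ‖Γ (e χ)‖
  set c : ℝ := (‖L‖ + 1)⁻¹ with hc
  have hcpos : 0 < c := by positivity
  have hlow : ∀ χ : {χ : X // 1 ≤ χ}, c ≤ ‖Γ (e χ)‖ := by
    intro χ
    have h1 : (1 : ℝ) ≤ (‖L‖ + 1) * ‖Γ (e χ)‖ := by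
      calc (1 : ℝ) = ‖e χ‖ := (hnorm_e χ).symm
        _ = ‖L (Γ (e χ))‖ := by rw [hLΓ]
        _ ≤ ‖L‖ * ‖Γ (e χ)‖ := L.le_opNorm _
        _ ≤ (‖L‖ + 1) * ‖Γ (e χ)‖ := by
            apply mul_le_mul_of_nonneg_right (by linarith) (norm_nonneg _)
    rw [hc, inv_le_iff_one_le_mul₀ (by positivity)]
    linarith
  -- the function S
  set S : {χ : X // 1 ≤ χ} → ℝ := fun η => ‖a (η : X)‖ ^ (2 : ℝ) with hS
  have hSsum : Summable S := by
    have h0 := (lp.memℓp (Γ (e ⟨1, le_refl 1⟩))).summable hp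
    rw [h2] at h0
    refine h0.congr fun η => ?_
    have := hΓ ⟨1, le_refl 1⟩ η
    simp only [he] at this ⊢
    rw [hS]
    simp [this, one_mul]
  -- tails of S become small
  have htail := (tendsto_order.1 (tendsto_tsum_compl_atTop_zero S)).2 _
    (Real.rpow_pos_of_pos hcpos (2 : ℝ))
  obtain ⟨F, hF⟩ := htail.exists
  -- choose a large group element
  obtain ⟨x, hx⟩ := exists_ne (1 : X)
  obtain ⟨g, hg⟩ : ∃ g : X, 1 < g := by
    rcases hx.lt_or_gt with h | h
    · exact ⟨x⁻¹, by simpa using h⟩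
    · exact ⟨x, h⟩
  set M : X := (insert (⟨1, le_refl 1⟩ : {χ : X // 1 ≤ χ}) F).sup' (Finset.insert_nonempty _ _)
      (fun η => (η : X)) with hM
  have hM1 : (1 : X) ≤ M := by
    rw [hM]
    set_option linter.unnecessarySimpa false in
    simpa using Finset.le_sup' (f := fun η : {χ : X // 1 ≤ χ} => (η : X))
      (Finset.mem_insert_self (⟨1, le_refl 1⟩ : {χ : X // 1 ≤ χ}) F)
  have hMF : ∀ η ∈ F, (η : X) ≤ M := by
    intro η hη
    rw [hM]
    exact Finset.le_sup' (f := fun η : {χ : X // 1 ≤ χ} => (η : X)) (Finset.mem_insert_of_mem hη)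
  have hMlt : M < g * M := by
    calc M = 1 * M := (one_mul M).symm
      _ < g * M := (mul_lt_mul_iff_right M).2 hg
  have hχ1 : (1 : X) ≤ g * M := le_of_lt (lt_of_le_of_lt hM1 hMlt)
  set χ₀ : {χ : X // 1 ≤ χ} := ⟨g * M, hχ1⟩ with hχ₀
  -- the injection into the complement of F
  have hnm : ∀ ξ : {χ : X // 1 ≤ χ}, (⟨(χ₀ : X) * (ξ : X), one_le_mul hχ1 ξ.2⟩ : {χ : X // 1 ≤ χ}) ∉ F := by
    intro ξ hmem
    have h1 : (χ₀ : X) * (ξ : X) ≤ M := hMF _ hmem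
    have h2' : (χ₀ : X) ≤ (χ₀ : X) * (ξ : X) := le_mul_of_one_le_right' ξ.2
    have : (χ₀ : X) ≤ M := le_trans h2' h1
    exact absurd (lt_of_le_of_lt this hMlt) (lt_irrefl _)
  set E : {χ : X // 1 ≤ χ} → {x : {χ : X // 1 ≤ χ} // x ∉ F} := fun ξ =>
    ⟨⟨(χ₀ : X) * (ξ : X), one_le_mul hχ1 ξ.2⟩, hnm ξ⟩ with hE
  have hEinj : Function.Injective E := by
    intro ξ ξ' h
    have h' : (χ₀ : X) * (ξ : X) = (χ₀ : X) * (ξ' : X) := by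
      have := congrArg (fun t : {x : {χ : X // 1 ≤ χ} // x ∉ F} => ((t : {χ : X // 1 ≤ χ}) : X)) h
      simpa [hE] using this
    exact Subtype.ext (mul_left_cancel h')
  -- the key inequality
  have hsum₀ := (lp.memℓp (Γ (e χ₀))).summable hp
  rw [h2] at hsum₀
  have hkey : ‖Γ (e χ₀)‖ ^ (2 : ℝ) ≤ ∑' (η : {x : {χ : X // 1 ≤ χ} // x ∉ F}), S η := by
    have hn := lp.norm_rpow_eq_tsum (p := 2) hp (Γ (e χ₀))
    rw [h2] at hn
    rw [hn]
    refine Summable.tsum_le_tsum_of_inj E hEinj (fun c _ => ?_) (fun ξ => ?_) hsum₀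
      (hSsum.subtype _)
    · rw [hS]; positivity
    · have := hΓ χ₀ ξ
      simp only [he] at this
      rw [this]
  -- contradiction
  have hge : c ^ (2 : ℝ) ≤ ‖Γ (e χ₀)‖ ^ (2 : ℝ) :=
    Real.rpow_le_rpow hcpos.le (hlow χ₀) (by norm_num)
  exact absurd (lt_of_le_of_lt (le_trans hge hkey) hF) (lt_irrefl _)
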